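/- Suppose H ⊆ ℝ² is an interior hole, i.e. the closure of H is contained in the open square (0,1) × (0,1). Then the survivor set J(H) has positive Hausdorff dimension: dim_H J(H) > 0. -/

import Mathlib

open MeasureTheory
open NNReal ENNReal

noncomputable section

/-- Real value of a bit. -/
def bval (b : Bool) : ℝ := if b then 1 else 0

/-- The unit square `X = [0,1) × [0,1)`. -/
def bakerX : Set (ℝ × ℝ) := Set.Ico (0:ℝ) 1 ×ˢ Set.Ico (0:ℝ) 1

/-- The baker's map. -/
def baker (p : ℝ × ℝ) : ℝ × ℝ :=
  if p.1 < 1/2 then (2 * p.1, p.2 / 2) else (2 * p.1 - 1, (p.2 + 1) / 2)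

/-- Inverse of the baker's map (on `X`). -/
def bakerInv (p : ℝ × ℝ) : ℝ × ℝ :=
  if p.2 < 1/2 then (p.1 / 2, 2 * p.2) else ((p.1 + 1) / 2, 2 * p.2 - 1)

/-- `B^n` for `n : ℤ`. -/
def bakerIter (n : ℤ) : (ℝ × ℝ) → (ℝ × ℝ) :=
  if 0 ≤ n then baker^[n.toNat] else bakerInv^[(-n).toNat]

/-- Survivor set of a hole `H`. -/
def survivor (H : Set (ℝ × ℝ)) : Set (ℝ × ℝ) :=
  {p | p ∈ bakerX ∧ ∀ n : ℤ, bakerIter n p ∉ H}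

/-- The coding map `π`. -/
def pibar (u : ℤ → Bool) : ℝ × ℝ :=
  (∑' n : ℕ, bval (u ((n : ℤ) + 1)) / 2 ^ (n + 1),
   ∑' n : ℕ, bval (u (-(n : ℤ))) / 2 ^ (n + 1))

/-- `σ^n` for `n : ℤ`. -/
def shiftIter (n : ℤ) (u : ℤ → Bool) : ℤ → Bool := fun m => u (m + n)

lemma bval_nonneg (b : Bool) : 0 ≤ bval b := by unfold bval; split <;> norm_num
lemma bval_le_one (b : Bool) : bval b ≤ 1 := by unfold bval; split <;> norm_num
lemma bval_false : bval false = 0 := rfl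
lemma bval_true : bval true = 1 := rfl

/-- value of a one-sided bit sequence, bits at positions 1,2,3,... -/
def bitval (v : ℕ → Bool) : ℝ := ∑' n : ℕ, bval (v n) / 2 ^ (n + 1)

lemma summable_bitval (v : ℕ → Bool) :
    Summable (fun n : ℕ => bval (v n) / 2 ^ (n + 1)) := by
  apply Summable.of_nonneg_of_le (fun n => div_nonneg (bval_nonneg _) (by positivity))
    (fun n => ?_) (summable_geometric_two.mul_left (1/2))
  · have := bval_le_one (v n)
    have h2 : (0:ℝ) < 2 ^ (n+1) := by positivity
    rw [div_le_iff₀ h2]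
    calc bval (v n) ≤ 1 := bval_le_one _
    _ = (1/2) * (1/2)^n * 2^(n+1) := by
        rw [div_pow, one_pow, pow_succ]; field_simp
    _ ≤ _ := le_refl _

lemma bitval_nonneg (v : ℕ → Bool) : 0 ≤ bitval v :=
  tsum_nonneg fun n => div_nonneg (bval_nonneg _) (by positivity)

lemma bitval_rec (v : ℕ → Bool) :
    bitval v = bval (v 0) / 2 + bitval (fun n => v (n + 1)) / 2 := by
  rw [bitval, Summable.tsum_eq_zero_add (summable_bitval v)]
  congr 1
  · norm_num
  · rw [bitval, ← tsum_div_const]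
    congr 1 with n
    rw [pow_succ]
    ring

lemma bitval_le_one (v : ℕ → Bool) : bitval v ≤ 1 := by
  have h : bitval v ≤ ∑' n : ℕ, (1/2:ℝ) * (1/2)^n := by
    apply Summable.tsum_le_tsum _ (summable_bitval v) (summable_geometric_two.mul_left (1/2))
    intro n
    have h2 : (0:ℝ) < 2 ^ (n+1) := by positivity
    rw [div_le_iff₀ h2]
    calc bval (v n) ≤ 1 := bval_le_one _
    _ = (1/2) * (1/2)^n * 2^(n+1) := by rw [div_pow, one_pow, pow_succ]; field_simp
    _ ≤ _ := le_refl _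
  calc bitval v ≤ ∑' n : ℕ, (1/2:ℝ) * (1/2)^n := h
  _ = (1/2) * 2 := by rw [_root_.tsum_mul_left, tsum_geometric_two]
  _ = 1 := by norm_num

lemma bitval_lt_one {v : ℕ → Bool} (j : ℕ) (h : v j = false) : bitval v < 1 := by
  induction j generalizing v with
  | zero =>
    rw [bitval_rec, h, bval_false]
    have := bitval_le_one (fun n => v (n+1))
    linarith
  | succ j ih =>
    rw [bitval_rec]
    have h1 := ih (v := fun n => v (n+1)) h
    have h2 := bval_le_one (v 0)
    linarith

lemma bitval_window {v : ℕ → Bool} {k : ℕ} (h : ∀ n < k, v n = false) :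
    bitval v ≤ (1/2) ^ k := by
  induction k generalizing v with
  | zero => simpa using bitval_le_one v
  | succ k ih =>
    rw [bitval_rec, h 0 (Nat.succ_pos k), bval_false]
    have h1 : bitval (fun n => v (n+1)) ≤ (1/2)^k :=
      ih fun n hn => h (n+1) (by omega)
    rw [pow_succ]
    linarith

lemma le_bitval (v : ℕ → Bool) : bval (v 0) / 2 ≤ bitval v := by
  rw [bitval_rec]
  have := bitval_nonneg (fun n => v (n+1))
  linarith

lemma bitval_lt_half {v : ℕ → Bool} (h0 : v 0 = false) (j : ℕ) (hj : v (j+1) = false) :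
    bitval v < 1/2 := by
  rw [bitval_rec, h0, bval_false]
  have := bitval_lt_one (v := fun n => v (n+1)) j hj
  linarith

lemma half_le_bitval {v : ℕ → Bool} (h0 : v 0 = true) : 1/2 ≤ bitval v := by
  have := le_bitval v
  rw [h0, bval_true] at this
  linarith

lemma bitval_ext {v w : ℕ → Bool} (h : ∀ n, v n = w n) : bitval v = bitval w := by
  unfold bitval; congr 1; funext n; rw [h]

def noCons (u : ℤ → Bool) : Prop := ∀ m : ℤ, u m = false ∨ u (m + 1) = false

lemma pibar_fst (u : ℤ → Bool) : (pibar u).1 = bitval (fun n => u ((n:ℤ) + 1)) := rfl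
lemma pibar_snd (u : ℤ → Bool) : (pibar u).2 = bitval (fun n => u (-(n:ℤ))) := rfl

lemma shiftIter_zero (u : ℤ → Bool) : shiftIter 0 u = u := by
  funext m; show u (m + 0) = u m; rw [add_zero]

lemma noCons_shift {u : ℤ → Bool} (h : noCons u) (n : ℤ) : noCons (shiftIter n u) := by
  intro m
  rcases h (m + n) with h' | h'
  · exact Or.inl h'
  · right; show u (m + 1 + n) = false; rwa [show m + 1 + n = m + n + 1 by ring]

lemma shiftIter_shiftIter (a b : ℤ) (u : ℤ → Bool) :
    shiftIter a (shiftIter b u) = shiftIter (b + a) u := by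
  funext m; show u (m + a + b) = u (m + (b + a)); rw [show m + a + b = m + (b + a) by ring]

lemma xc_rec (u : ℤ → Bool) :
    (pibar u).1 = bval (u 1) / 2 + (pibar (shiftIter 1 u)).1 / 2 := by
  rw [pibar_fst, pibar_fst, bitval_rec]
  have e0 : bval ((fun n : ℕ => u ((n:ℤ)+1)) 0) = bval (u 1) := by norm_num
  have e1 : bitval (fun n => (fun m : ℕ => u ((m:ℤ)+1)) (n+1))
      = bitval (fun n => shiftIter 1 u ((n:ℤ)+1)) :=
    bitval_ext fun n => by show u (((n+1:ℕ):ℤ)+1) = u ((n:ℤ)+1+1); congr 1 <;> omega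
  rw [e0, e1]

lemma yc_rec (u : ℤ → Bool) :
    (pibar u).2 = bval (u 0) / 2 + (pibar (shiftIter (-1) u)).2 / 2 := by
  rw [pibar_snd, pibar_snd, bitval_rec]
  have e0 : bval ((fun n : ℕ => u (-(n:ℤ))) 0) = bval (u 0) := by norm_num
  have e1 : bitval (fun n => (fun m : ℕ => u (-(m:ℤ))) (n+1))
      = bitval (fun n => shiftIter (-1) u (-(n:ℤ))) :=
    bitval_ext fun n => by show u (-((n+1:ℕ):ℤ)) = u (-(n:ℤ) + -1); congr 1 <;> omega
  rw [e0, e1]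

lemma xc_rec' (u : ℤ → Bool) :
    (pibar (shiftIter (-1) u)).1 = bval (u 0) / 2 + (pibar u).1 / 2 := by
  rw [pibar_fst, pibar_fst]
  have e : bitval (fun n => shiftIter (-1) u ((n:ℤ)+1)) = bitval (fun n => u (n:ℤ)) :=
    bitval_ext fun n => by show u ((n:ℤ)+1+(-1)) = u (n:ℤ); congr 1 <;> omega
  rw [e, bitval_rec]
  have e0 : bval ((fun n : ℕ => u (n:ℤ)) 0) = bval (u 0) := by norm_num
  have e1 : bitval (fun n => (fun m : ℕ => u (m:ℤ)) (n+1)) = bitval (fun n => u ((n:ℤ)+1)) :=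
    bitval_ext fun n => by show u ((n+1:ℕ):ℤ) = u ((n:ℤ)+1); congr 1 <;> omega
  rw [e0, e1]

lemma yc_rec' (u : ℤ → Bool) :
    (pibar (shiftIter 1 u)).2 = bval (u 1) / 2 + (pibar u).2 / 2 := by
  rw [pibar_snd, pibar_snd]
  have e : bitval (fun n => shiftIter 1 u (-(n:ℤ))) = bitval (fun n => u (1-(n:ℤ))) :=
    bitval_ext fun n => by show u (-(n:ℤ)+1) = u (1-(n:ℤ)); congr 1 <;> omega
  rw [e, bitval_rec]
  have e0 : bval ((fun n : ℕ => u (1-(n:ℤ))) 0) = bval (u 1) := by norm_num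
  have e1 : bitval (fun n => (fun m : ℕ => u (1-(m:ℤ))) (n+1)) = bitval (fun n => u (-(n:ℤ))) :=
    bitval_ext fun n => by show u (1-((n+1:ℕ):ℤ)) = u (-(n:ℤ)); congr 1 <;> omega
  rw [e0, e1]

lemma xc_lt_half {u : ℤ → Bool} (hQ : noCons u) (h1 : u 1 = false) : (pibar u).1 < 1/2 := by
  rw [pibar_fst]
  have h0' : (fun n : ℕ => u ((n:ℤ)+1)) 0 = false := by norm_num [h1]
  rcases hQ 2 with h | h
  · exact bitval_lt_half h0' 0 (by show u (((0+1:ℕ):ℤ)+1) = false; norm_num; exact h)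
  · exact bitval_lt_half h0' 1 (by show u (((1+1:ℕ):ℤ)+1) = false; norm_num; exact h)

lemma half_le_xc {u : ℤ → Bool} (h1 : u 1 = true) : 1/2 ≤ (pibar u).1 := by
  rw [pibar_fst]
  exact half_le_bitval (by show u (((0:ℕ):ℤ)+1) = true; norm_num [h1])

lemma yc_lt_half {u : ℤ → Bool} (hQ : noCons u) (h0 : u 0 = false) : (pibar u).2 < 1/2 := by
  rw [pibar_snd]
  have h0' : (fun n : ℕ => u (-(n:ℤ))) 0 = false := by norm_num [h0]
  rcases hQ (-2) with h | h
  · exact bitval_lt_half h0' 1 (by show u (-((1+1:ℕ):ℤ)) = false; norm_num; exact h)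
  · exact bitval_lt_half h0' 0 (by show u (-((0+1:ℕ):ℤ)) = false; norm_num; exact h)

lemma half_le_yc {u : ℤ → Bool} (h0 : u 0 = true) : 1/2 ≤ (pibar u).2 := by
  rw [pibar_snd]
  exact half_le_bitval (by show u (-((0:ℕ):ℤ)) = true; norm_num [h0])

lemma pibar_mem_bakerX {u : ℤ → Bool} (hQ : noCons u) : pibar u ∈ bakerX := by
  constructor
  · refine ⟨bitval_nonneg _, ?_⟩
    rw [pibar_fst]
    rcases hQ 1 with h | h
    · exact bitval_lt_one 0 (by show u (((0:ℕ):ℤ)+1) = false; norm_num; exact h)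
    · exact bitval_lt_one 1 (by show u (((1:ℕ):ℤ)+1) = false; norm_num; exact h)
  · refine ⟨bitval_nonneg _, ?_⟩
    rw [pibar_snd]
    rcases hQ (-1) with h | h
    · exact bitval_lt_one 1 (by show u (-((1:ℕ):ℤ)) = false; norm_num; exact h)
    · exact bitval_lt_one 0 (by show u (-((0:ℕ):ℤ)) = false; norm_num; exact h)

lemma baker_pibar {u : ℤ → Bool} (hQ : noCons u) :
    baker (pibar u) = pibar (shiftIter 1 u) := by
  have hx := xc_rec u
  have hy := yc_rec' u
  cases h1 : u 1 with
  | false =>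
    rw [baker, if_pos (xc_lt_half hQ h1)]
    rw [h1, bval_false] at hx hy
    ext
    · show 2 * (pibar u).1 = _; rw [hx]; ring
    · show (pibar u).2 / 2 = _; rw [hy]; ring
  | true =>
    rw [baker, if_neg (not_lt.2 (half_le_xc h1))]
    rw [h1, bval_true] at hx hy
    ext
    · show 2 * (pibar u).1 - 1 = _; rw [hx]; ring
    · show ((pibar u).2 + 1) / 2 = _; rw [hy]; ring

lemma bakerInv_pibar {u : ℤ → Bool} (hQ : noCons u) :
    bakerInv (pibar u) = pibar (shiftIter (-1) u) := by
  have hx := xc_rec' u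
  have hy := yc_rec u
  cases h0 : u 0 with
  | false =>
    rw [bakerInv, if_pos (yc_lt_half hQ h0)]
    rw [h0, bval_false] at hx hy
    ext
    · show (pibar u).1 / 2 = _; rw [hx]; ring
    · show 2 * (pibar u).2 = _; rw [hy]; ring
  | true =>
    rw [bakerInv, if_neg (not_lt.2 (half_le_yc h0))]
    rw [h0, bval_true] at hx hy
    ext
    · show ((pibar u).1 + 1) / 2 = _; rw [hx]; ring
    · show 2 * (pibar u).2 - 1 = _; rw [hy]; ring

lemma baker_iter_pibar {u : ℤ → Bool} (hQ : noCons u) (j : ℕ) :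
    baker^[j] (pibar u) = pibar (shiftIter j u) := by
  induction j with
  | zero => rw [Function.iterate_zero_apply, Nat.cast_zero, shiftIter_zero]
  | succ j ih =>
    rw [Function.iterate_succ_apply', ih, baker_pibar (noCons_shift hQ j),
      shiftIter_shiftIter]
    rw [show ((j:ℤ) + 1) = (((j+1:ℕ):ℤ)) by push_cast; ring]

lemma bakerInv_iter_pibar {u : ℤ → Bool} (hQ : noCons u) (j : ℕ) :
    bakerInv^[j] (pibar u) = pibar (shiftIter (-(j:ℤ)) u) := by
  induction j with
  | zero => rw [Function.iterate_zero_apply, Nat.cast_zero, neg_zero, shiftIter_zero]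
  | succ j ih =>
    rw [Function.iterate_succ_apply', ih, bakerInv_pibar (noCons_shift hQ _),
      shiftIter_shiftIter]
    rw [show (-(j:ℤ) + -1) = (-((j+1:ℕ):ℤ)) by push_cast; ring]

lemma bakerIter_pibar {u : ℤ → Bool} (hQ : noCons u) (n : ℤ) :
    bakerIter n (pibar u) = pibar (shiftIter n u) := by
  by_cases h : 0 ≤ n
  · rw [bakerIter, if_pos h, baker_iter_pibar hQ, show (n.toNat : ℤ) = n by omega]
  · rw [bakerIter, if_neg h, bakerInv_iter_pibar hQ, show -(((-n).toNat : ℕ) : ℤ) = n by omega]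

/-! ### The special family of surviving points -/

/-- the sequence with bits of `b` placed at positions `N, 2N, 3N, ...` where `N = 2k+2`. -/
def ub (k : ℕ) (b : ℕ → Bool) : ℤ → Bool := fun m =>
  if 0 < m ∧ m % (2*(k:ℤ)+2) = 0 then b (m.toNat / (2*k+2)) else false

lemma ub_eq_false {k : ℕ} {b : ℕ → Bool} {m : ℤ}
    (h : ¬(0 < m ∧ m % (2*(k:ℤ)+2) = 0)) : ub k b m = false := if_neg h

lemma noCons_ub (k : ℕ) (b : ℕ → Bool) : noCons (ub k b) := by
  intro m
  by_cases h : 0 < m ∧ m % (2*(k:ℤ)+2) = 0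
  · right
    apply ub_eq_false
    rintro ⟨h1, h2⟩
    have d1 : (2*(k:ℤ)+2) ∣ m := Int.dvd_of_emod_eq_zero h.2
    have d2 : (2*(k:ℤ)+2) ∣ (m+1) := Int.dvd_of_emod_eq_zero h2
    have d3 : (2*(k:ℤ)+2) ∣ 1 := by simpa using dvd_sub d2 d1
    have := Int.le_of_dvd one_pos d3
    omega
  · exact Or.inl (ub_eq_false h)

lemma ub_window (k : ℕ) (b : ℕ → Bool) (n : ℤ) :
    (∀ m : ℕ, m < k → ub k b ((m:ℤ) + 1 + n) = false) ∨
    (∀ m : ℕ, m < k → ub k b (-(m:ℤ) + n) = false) := by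
  by_cases hex : ∃ m₀ : ℕ, m₀ < k ∧ (0 < (m₀:ℤ) + 1 + n ∧ ((m₀:ℤ) + 1 + n) % (2*(k:ℤ)+2) = 0)
  · right
    obtain ⟨m₀, hm₀, hpos, hdvd⟩ := hex
    intro m hm
    apply ub_eq_false
    rintro ⟨h1, h2⟩
    have d1 : (2*(k:ℤ)+2) ∣ ((m₀:ℤ) + 1 + n) := Int.dvd_of_emod_eq_zero hdvd
    have d2 : (2*(k:ℤ)+2) ∣ (-(m:ℤ) + n) := Int.dvd_of_emod_eq_zero h2
    have d3 : (2*(k:ℤ)+2) ∣ ((m₀:ℤ) + 1 + (m:ℤ)) := by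
      have := dvd_sub d1 d2
      have e : ((m₀:ℤ) + 1 + n) - (-(m:ℤ) + n) = (m₀:ℤ) + 1 + (m:ℤ) := by ring
      rwa [e] at this
    have := Int.le_of_dvd (by positivity) d3
    omega
  · left
    intro m hm
    apply ub_eq_false
    intro hc
    exact hex ⟨m, hm, hc⟩

lemma xsmall {k : ℕ} {u : ℤ → Bool} {n : ℤ}
    (hw : ∀ m : ℕ, m < k → u ((m:ℤ) + 1 + n) = false) :
    (pibar (shiftIter n u)).1 ≤ (1/2)^k := by
  rw [pibar_fst]
  exact bitval_window fun m hm => hw m hm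

lemma ysmall {k : ℕ} {u : ℤ → Bool} {n : ℤ}
    (hw : ∀ m : ℕ, m < k → u (-(m:ℤ) + n) = false) :
    (pibar (shiftIter n u)).2 ≤ (1/2)^k := by
  rw [pibar_snd]
  exact bitval_window fun m hm => hw m hm

lemma ub_mem_survivor {H : Set (ℝ × ℝ)} {δ : ℝ} (hδ : ∀ p ∈ H, δ ≤ p.1 ∧ δ ≤ p.2)
    {k : ℕ} (hk : (1/2:ℝ)^k < δ) (b : ℕ → Bool) :
    pibar (ub k b) ∈ survivor H := by
  refine ⟨pibar_mem_bakerX (noCons_ub k b), fun n hmem => ?_⟩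
  rw [bakerIter_pibar (noCons_ub k b)] at hmem
  rcases ub_window k b n with hw | hw
  · have h1 := xsmall hw
    have := (hδ _ hmem).1
    linarith
  · have h1 := ysmall hw
    have := (hδ _ hmem).2
    linarith

/-! ### `N`-spaced bit values -/

/-- value of a bit sequence with bits at positions `N, 2N, 3N, ...` -/
def gval (N : ℕ) (c : ℕ → Bool) : ℝ := ∑' i : ℕ, bval (c i) / 2 ^ ((i+1)*N)

lemma gval_term_le {N : ℕ} (hN : 1 ≤ N) (c : ℕ → Bool) (i : ℕ) :
    bval (c i) / 2 ^ ((i+1)*N) ≤ (1/2)^(i+1) := by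
  have h1 : ((1:ℝ)/2)^((i+1)*N) ≤ (1/2)^(i+1) := by
    apply pow_le_pow_of_le_one (by norm_num) (by norm_num)
    nlinarith
  calc bval (c i) / 2 ^ ((i+1)*N) ≤ 1 / 2 ^ ((i+1)*N) := by
        apply div_le_div_of_nonneg_right (bval_le_one _) ?_ |>.trans_eq rfl
        positivity
  _ = (1/2)^((i+1)*N) := by rw [div_pow, one_pow]
  _ ≤ (1/2)^(i+1) := h1

lemma gval_term_le' {N : ℕ} (c : ℕ → Bool) (i : ℕ) :
    bval (c i) / 2 ^ ((i+1)*N) ≤ (1/2)^((i+1)*N) := by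
  rw [div_pow, one_pow]
  apply div_le_div_of_nonneg_right (bval_le_one _) ?_ |>.trans_eq rfl
  positivity

lemma summable_gval {N : ℕ} (hN : 1 ≤ N) (c : ℕ → Bool) :
    Summable (fun i : ℕ => bval (c i) / 2 ^ ((i+1)*N)) := by
  apply Summable.of_nonneg_of_le (fun i => div_nonneg (bval_nonneg _) (by positivity))
    (fun i => gval_term_le hN c i)
  have : Summable (fun i : ℕ => ((1:ℝ)/2)^i) := summable_geometric_two
  exact this.mul_left (1/2) |>.congr (fun i => by rw [pow_succ]; ring)

lemma gval_nonneg (N : ℕ) (c : ℕ → Bool) : 0 ≤ gval N c :=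
  tsum_nonneg fun i => div_nonneg (bval_nonneg _) (by positivity)

lemma summable_geom_two_shift (a : ℕ) : Summable (fun i : ℕ => ((1:ℝ)/2)^(i+a)) := by
  have h : Summable (fun i : ℕ => ((1:ℝ)/2)^i) := summable_geometric_two
  exact (h.mul_left ((1/2)^a)).congr (fun i => by rw [pow_add]; ring)

lemma gval_le_half {N : ℕ} (hN : 2 ≤ N) (c : ℕ → Bool) : gval N c ≤ 1/2 := by
  have h : gval N c ≤ ∑' i : ℕ, ((1:ℝ)/2)^(i+2) := by
    refine Summable.tsum_le_tsum (fun i => ?_) (summable_gval (by omega) c) (summable_geom_two_shift 2)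
    refine (gval_term_le' c i).trans ?_
    apply pow_le_pow_of_le_one (by norm_num) (by norm_num)
    nlinarith
  calc gval N c ≤ ∑' i : ℕ, ((1:ℝ)/2)^(i+2) := h
  _ = (1/2)^2 * ∑' i : ℕ, ((1:ℝ)/2)^i := by
      rw [← _root_.tsum_mul_left]; congr 1 with i; rw [pow_add]; ring
  _ = 1/2 := by rw [tsum_geometric_two]; norm_num

lemma gval_rec {N : ℕ} (hN : 1 ≤ N) (c : ℕ → Bool) :
    gval N c = (bval (c 0) + gval N (fun i => c (i+1))) / 2 ^ N := by
  rw [gval, Summable.tsum_eq_zero_add (summable_gval hN c), gval, add_div, ← tsum_div_const]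
  congr 1
  · norm_num
  · congr 1 with i
    rw [show (i+1+1)*N = (i+1)*N + N by ring, pow_add]
    ring

/-! ### digit extraction from `gval` -/

lemma gval_lt_one {N : ℕ} (hN : 2 ≤ N) (c : ℕ → Bool) : gval N c < 1 :=
  lt_of_le_of_lt (gval_le_half hN c) (by norm_num)

lemma bval_eq_cond (b : Bool) : bval b = ((cond b 1 0 : ℤ) : ℝ) := by
  cases b <;> simp [bval]

lemma floor_bval_pow_add (b : Bool) (M : ℕ) (x : ℝ) :
    ⌊bval b * 2 ^ M + x⌋ = cond b 1 0 * 2 ^ M + ⌊x⌋ := by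
  cases b
  · rw [bval_false]; norm_num
  · rw [bval_true, one_mul]
    have h : ((2 ^ M : ℤ) : ℝ) = 2 ^ M := by push_cast; ring
    rw [← h, Int.floor_intCast_add]
    norm_num

lemma parity_gval {N : ℕ} (hN : 2 ≤ N) (c : ℕ → Bool) (j : ℕ) :
    ⌊gval N c * 2 ^ ((j+1)*N)⌋ % 2 = (cond (c j) 1 0 : ℤ) := by
  induction j generalizing c with
  | zero =>
    have h1 : gval N c * 2 ^ ((0+1)*N)
        = bval (c 0) * 2 ^ 0 + gval N (fun i => c (i+1)) := by
      rw [gval_rec (by omega) c]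
      have h2 : (2:ℝ) ^ N ≠ 0 := by positivity
      rw [pow_zero, mul_one, show (0+1)*N = N by ring]
      field_simp
    rw [h1, floor_bval_pow_add]
    have h2 : ⌊gval N (fun i => c (i+1))⌋ = 0 := by
      rw [Int.floor_eq_zero_iff]
      exact ⟨gval_nonneg _ _, gval_lt_one hN _⟩
    rw [h2, add_zero]
    cases c 0 <;> decide
  | succ j ih =>
    have hiv := ih (fun i => c (i+1))
    have h1 : gval N c * 2 ^ ((j+1+1)*N)
        = bval (c 0) * 2 ^ ((j+1)*N)
          + gval N (fun i => c (i+1)) * 2 ^ ((j+1)*N) := by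
      rw [gval_rec (by omega) c]
      rw [show (j+1+1)*N = (j+1)*N + N by ring, pow_add]
      have h2 : (2:ℝ) ^ N ≠ 0 := by positivity
      field_simp
    rw [h1, floor_bval_pow_add]
    have h2 : (2:ℤ) ∣ cond (c 0) 1 0 * 2 ^ ((j+1)*N) :=
      Dvd.dvd.mul_left (dvd_pow_self 2 (Nat.mul_ne_zero (by omega) (by omega))) _
    omega

/-- the digit-reading map -/
def digRead (N : ℕ) (x : ℝ) : ℝ := bitval (fun j => decide (⌊x * 2 ^ ((j+1)*N)⌋ % 2 = 1))

lemma digRead_gval {N : ℕ} (hN : 2 ≤ N) (c : ℕ → Bool) : digRead N (gval N c) = bitval c := by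
  apply bitval_ext
  intro j
  rw [parity_gval hN c j]
  cases c j <;> decide

/-! ### separation -/

lemma gval_sep {N : ℕ} (hN : 2 ≤ N) (c c' : ℕ → Bool) (j₀ : ℕ)
    (h : ∀ i, i < j₀ → c i = c' i) (hne : c j₀ ≠ c' j₀) :
    (1/2:ℝ) ^ ((j₀+1)*N + 1) ≤ |gval N c - gval N c'| := by
  have hP : (0:ℝ) < 2 ^ N := by positivity
  induction j₀ generalizing c c' with
  | zero =>
    have key : ∀ d d' : ℕ → Bool, d 0 = true → d' 0 = false →
        (1/2:ℝ)^((0+1)*N+1) ≤ gval N d - gval N d' := by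
      intro d d' hd hd'
      have r1 := gval_rec (show 1 ≤ N by omega) d
      have r2 := gval_rec (show 1 ≤ N by omega) d'
      rw [hd, bval_true] at r1
      rw [hd', bval_false] at r2
      have b1 : (0:ℝ) ≤ gval N (fun i => d (i+1)) := gval_nonneg _ _
      have b2 : gval N (fun i => d' (i+1)) ≤ 1/2 := gval_le_half hN _
      have hm : gval N d - gval N d'
          = (1 + gval N (fun i => d (i+1)) - gval N (fun i => d' (i+1))) / 2^N := by
        rw [r1, r2]; ring
      have he : (1/2:ℝ)^((0+1)*N+1) = (1/2) / 2^N := by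
        rw [show (0+1)*N+1 = N+1 by ring, pow_succ, div_pow, one_pow]
        ring
      rw [hm, he]
      exact div_le_div_of_nonneg_right (by linarith) hP.le
    rcases Bool.eq_false_or_eq_true (c 0) with h0 | h0 <;>
      rcases Bool.eq_false_or_eq_true (c' 0) with h0' | h0'
    · exact absurd (h0.trans h0'.symm) hne
    · exact (key c c' h0 h0').trans (le_abs_self _)
    · rw [abs_sub_comm]
      exact (key c' c h0' h0).trans (le_abs_self _)
    · exact absurd (h0.trans h0'.symm) hne
    
  | succ j₀ ih =>
    have r1 := gval_rec (show 1 ≤ N by omega) c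
    have r2 := gval_rec (show 1 ≤ N by omega) c'
    have h0 : c 0 = c' 0 := h 0 (Nat.succ_pos _)
    have hm : gval N c - gval N c'
        = (gval N (fun i => c (i+1)) - gval N (fun i => c' (i+1))) / 2^N := by
      rw [r1, r2, h0]; ring
    have hsep := ih (fun i => c (i+1)) (fun i => c' (i+1))
      (fun i hi => h (i+1) (by omega)) hne
    have he : (1/2:ℝ)^((j₀+1+1)*N+1) = (1/2)^((j₀+1)*N+1) / 2^N := by
      rw [show (j₀+1+1)*N+1 = ((j₀+1)*N+1) + N by ring, pow_add, one_div_pow (2:ℝ) N, mul_one_div]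
    rw [hm, he, abs_div, abs_of_pos hP]
    exact div_le_div_of_nonneg_right hsep hP.le

/-! ### closeness of bitvals -/

lemma bitval_diff {v w : ℕ → Bool} {J : ℕ} (h : ∀ i, i < J → v i = w i) :
    |bitval v - bitval w| ≤ (1/2) ^ J := by
  induction J generalizing v w with
  | zero =>
    have b1 := bitval_nonneg v
    have b2 := bitval_nonneg w
    have b3 := bitval_le_one v
    have b4 := bitval_le_one w
    rw [pow_zero, abs_le]
    constructor <;> linarith
  | succ J ih =>
    have h0 : v 0 = w 0 := h 0 (Nat.succ_pos _)
    have hm : bitval v - bitval w = (bitval (fun n => v (n+1)) - bitval (fun n => w (n+1))) / 2 := by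
      rw [bitval_rec v, bitval_rec w, h0]; ring
    have hd := ih (v := fun n => v (n+1)) (w := fun n => w (n+1)) (fun i hi => h (i+1) (by omega))
    rw [hm, abs_div, abs_of_pos (by norm_num : (0:ℝ) < 2), pow_succ]
    linarith

/-! ### binary expansions exist -/

lemma floor_two_mul_cases (t : ℝ) : ⌊2*t⌋ = 2*⌊t⌋ ∨ ⌊2*t⌋ = 2*⌊t⌋+1 := by
  have h1 : (2*⌊t⌋ : ℤ) ≤ ⌊2*t⌋ := by
    apply Int.le_floor.2; push_cast; linarith [Int.floor_le t]
  have h2 : ⌊2*t⌋ < 2*⌊t⌋ + 2 := by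
    apply Int.floor_lt.2; push_cast; linarith [Int.lt_floor_add_one t]
  omega

lemma bval_parity (z : ℤ) : bval (decide (z % 2 = 1)) = ((z % 2 : ℤ) : ℝ) := by
  have h : z % 2 = 0 ∨ z % 2 = 1 := Int.emod_two_eq_zero_or_one z
  rcases h with h | h <;> rw [h] <;> simp [bval]

lemma exists_bitval {y : ℝ} (h0 : 0 ≤ y) (h1 : y < 1) : ∃ v : ℕ → Bool, bitval v = y := by
  classical
  set v : ℕ → Bool := fun n => decide (⌊y * 2^(n+1)⌋ % 2 = 1) with hv
  refine ⟨v, ?_⟩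
  have key : ∀ n : ℕ, ∑ j ∈ Finset.range n, bval (v j) / 2^(j+1) = (⌊y * 2^n⌋ : ℝ)/2^n := by
    intro n
    induction n with
    | zero =>
      rw [Finset.sum_range_zero]
      have : ⌊y * 2^0⌋ = 0 := by
        rw [Int.floor_eq_zero_iff]
        constructor
        · simpa using h0
        · simpa using h1
      rw [this]
      norm_num
    | succ n ih =>
      rw [Finset.sum_range_succ, ih]
      have e2 : ⌊y * 2^(n+1)⌋ = ⌊2*(y*2^n)⌋ := by congr 1; ring
      have e3 : ⌊y * 2^(n+1)⌋ = 2*⌊y*2^n⌋ + ⌊y * 2^(n+1)⌋ % 2 := by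
        rcases floor_two_mul_cases (y*2^n) with h | h <;> omega
      have e4 : bval (v n) = ((⌊y * 2^(n+1)⌋ % 2 : ℤ) : ℝ) := bval_parity _
      rw [e4]
      have hpow : (2:ℝ)^(n+1) ≠ 0 := by positivity
      have hpow' : (2:ℝ)^n ≠ 0 := by positivity
      rw [show ((⌊y * 2^(n+1)⌋ : ℝ)) = 2*(⌊y*2^n⌋:ℝ) + ((⌊y * 2^(n+1)⌋ % 2 : ℤ) : ℝ) by
        rw [← Int.cast_ofNat]; exact_mod_cast congrArg (fun z : ℤ => (z:ℝ)) e3]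
      rw [pow_succ]
      field_simp
  have hs : Filter.Tendsto (fun n : ℕ => (⌊y * 2^n⌋ : ℝ)/2^n) Filter.atTop (nhds (bitval v)) := by
    have := (summable_bitval v).hasSum.tendsto_sum_nat
    exact this.congr key
  have hlim : Filter.Tendsto (fun n : ℕ => (⌊y * 2^n⌋ : ℝ)/2^n) Filter.atTop (nhds y) := by
    rw [tendsto_iff_dist_tendsto_zero]
    apply squeeze_zero (fun n => dist_nonneg) (g := fun n => (1/2:ℝ)^n)
    · intro n
      rw [Real.dist_eq, abs_le]
      have hf1 := Int.floor_le (y * 2^n)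
      have hf2 := Int.lt_floor_add_one (y * 2^n)
      have hp : (0:ℝ) < 2^n := by positivity
      have hq : ((1:ℝ)/2)^n = 1/2^n := by rw [div_pow, one_pow]
      have hA1 : (⌊y * 2^n⌋:ℝ)/2^n ≤ y := by rw [div_le_iff₀ hp]; linarith
      have hA2 : y ≤ (⌊y * 2^n⌋:ℝ)/2^n + 1/2^n := by
        have e : (⌊y * 2^n⌋:ℝ)/2^n + 1/2^n = ((⌊y * 2^n⌋:ℝ)+1)/2^n := by ring
        rw [e, le_div_iff₀ hp]
        linarith
      have h5 : (0:ℝ) ≤ 1/2^n := by positivity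
      rw [hq]
      constructor <;> linarith
    · exact tendsto_pow_atTop_nhds_zero_of_lt_one (by norm_num) (by norm_num)
  exact tendsto_nhds_unique hs hlim

/-! ### the first coordinate of `pibar (ub k b)` -/

lemma pibar_ub_fst (k : ℕ) (b : ℕ → Bool) :
    (pibar (ub k b)).1 = gval (2*k+2) (fun i => b (i+1)) := by
  classical
  rw [pibar_fst, bitval, gval]
  have hinj : Function.Injective (fun j : ℕ => (j+1)*(2*k+2) - 1) := by
    intro a a' h
    simp only at h
    have h1 : 1 ≤ (a+1)*(2*k+2) := Nat.one_le_iff_ne_zero.2 (Nat.mul_ne_zero (by omega) (by omega))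
    have h2 : 1 ≤ (a'+1)*(2*k+2) := Nat.one_le_iff_ne_zero.2 (Nat.mul_ne_zero (by omega) (by omega))
    have h3 : (a+1)*(2*k+2) = (a'+1)*(2*k+2) := by omega
    have h4 : a + 1 = a' + 1 := Nat.eq_of_mul_eq_mul_right (by omega) h3
    omega
  have hsupp : ∀ n : ℕ, bval (ub k b ((n:ℤ)+1)) / 2^(n+1) ≠ 0 →
      n ∈ Set.range (fun j : ℕ => (j+1)*(2*k+2) - 1) := by
    intro n hn
    by_cases hc : 0 < (n:ℤ)+1 ∧ ((n:ℤ)+1) % (2*(k:ℤ)+2) = 0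
    · have hd : ((2*k+2 : ℕ) : ℤ) ∣ ((n:ℤ)+1) := by
        push_cast
        exact Int.dvd_of_emod_eq_zero hc.2
      have hd2 : (2*k+2) ∣ (n+1) := by
        have : ((n:ℤ)+1) = ((n+1 : ℕ) : ℤ) := by push_cast; ring
        rw [this] at hd
        exact_mod_cast hd
      obtain ⟨s, hs⟩ := hd2
      have hs1 : 1 ≤ s := by
        rcases Nat.eq_zero_or_pos s with rfl | h
        · rw [mul_zero] at hs; omega
        · omega
      refine ⟨s - 1, ?_⟩
      simp only
      have e1 : s - 1 + 1 = s := by omega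
      rw [e1, mul_comm]
      omega
    · exact absurd (by rw [ub_eq_false hc, bval_false, zero_div]) hn
  have := Function.Injective.tsum_eq hinj
    (f := fun n : ℕ => bval (ub k b ((n:ℤ)+1)) / 2^(n+1))
    (fun n hn => hsupp n hn)
  rw [← this]
  congr 1 with j
  have h1 : 1 ≤ (j+1)*(2*k+2) := Nat.one_le_iff_ne_zero.2 (Nat.mul_ne_zero (by omega) (by omega))
  have e2 : (j+1)*(2*k+2) - 1 + 1 = (j+1)*(2*k+2) := by omega
  have e3 : ((((j+1)*(2*k+2) - 1 : ℕ)):ℤ) + 1 = (((j+1)*(2*k+2) : ℕ) : ℤ) := by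
    exact_mod_cast congrArg (Nat.cast : ℕ → ℤ) e2
  rw [e2, e3]
  have hub : ub k b ((((j+1)*(2*k+2) : ℕ) : ℤ)) = b (j+1) := by
    rw [ub]
    have hcond : 0 < ((((j+1)*(2*k+2) : ℕ)) : ℤ) ∧
        ((((j+1)*(2*k+2) : ℕ)) : ℤ) % (2*(k:ℤ)+2) = 0 := by
      constructor
      · exact_mod_cast Nat.lt_of_lt_of_le Nat.zero_lt_one h1
      · have : ((((j+1)*(2*k+2) : ℕ)) : ℤ) = ((j:ℤ)+1) * (2*(k:ℤ)+2) := by push_cast; ring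
        rw [this]
        exact Int.mul_emod_left _ _
    rw [if_pos hcond, Int.toNat_natCast, Nat.mul_div_cancel _ (by omega)]
  rw [hub]

/-! ### Hölder estimate -/

lemma holder_real {N : ℕ} (hN : 2 ≤ N) (c c' : ℕ → Bool) :
    |digRead N (gval N c) - digRead N (gval N c')|
      ≤ 4 * |gval N c - gval N c'| ^ ((N:ℝ)⁻¹) := by
  rw [digRead_gval hN c, digRead_gval hN c']
  by_cases hcc : ∀ j, c j = c' j
  · have hc : c = c' := funext hcc
    subst hc
    simp only [sub_self, abs_zero]
    positivity
  · push_neg at hcc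
    have hex : ∃ j, c j ≠ c' j := hcc
    set j₀ := Nat.find hex with hj₀
    have hne : c j₀ ≠ c' j₀ := Nat.find_spec hex
    have hpre : ∀ i, i < j₀ → c i = c' i := fun i hi => not_not.1 (Nat.find_min hex hi)
    have A : |bitval c - bitval c'| ≤ (1/2)^j₀ := bitval_diff hpre
    have B : (1/2:ℝ) ^ ((j₀+1)*N + 1) ≤ |gval N c - gval N c'| := gval_sep hN c c' j₀ hpre hne
    have hN2 : (2:ℝ) ≤ N := by exact_mod_cast hN
    have hNpos : (0:ℝ) < N := by linarith
    have h1 : ((1/2:ℝ)^((j₀+1)*N+1)) ^ ((N:ℝ)⁻¹) ≤ |gval N c - gval N c'| ^ ((N:ℝ)⁻¹) :=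
      Real.rpow_le_rpow (by positivity) B (by positivity)
    have h2 : ((1/2:ℝ)^((j₀+1)*N+1)) ^ ((N:ℝ)⁻¹)
        = (1/2:ℝ) ^ ((((j₀+1)*N+1 : ℕ):ℝ) * (N:ℝ)⁻¹) := by
      rw [← Real.rpow_natCast (1/2 : ℝ) ((j₀+1)*N+1), ← Real.rpow_mul (by norm_num : (0:ℝ) ≤ 1/2)]
    have hexp : (((j₀+1)*N+1 : ℕ):ℝ) * (N:ℝ)⁻¹ ≤ ((j₀:ℝ) + 2) := by
      rw [inv_eq_one_div, mul_one_div, div_le_iff₀ hNpos]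
      push_cast
      have : (1:ℝ) ≤ N := by linarith
      nlinarith
    have h3 : (1/2:ℝ) ^ (((j₀:ℝ) + 2)) ≤ (1/2:ℝ) ^ ((((j₀+1)*N+1 : ℕ):ℝ) * (N:ℝ)⁻¹) :=
      Real.rpow_le_rpow_of_exponent_ge (by norm_num) (by norm_num) hexp
    have h4 : (1/2:ℝ) ^ (((j₀:ℝ) + 2)) = (1/2:ℝ)^(j₀+2) := by
      rw [← Real.rpow_natCast (1/2:ℝ) (j₀+2)]
      norm_num
    have h5 : (1/2:ℝ)^j₀ = 4 * (1/2:ℝ)^(j₀+2) := by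
      rw [pow_add]
      ring
    calc |bitval c - bitval c'| ≤ (1/2)^j₀ := A
    _ = 4 * (1/2:ℝ)^(j₀+2) := h5
    _ = 4 * (1/2:ℝ) ^ (((j₀:ℝ) + 2)) := by rw [h4]
    _ ≤ 4 * (1/2:ℝ) ^ ((((j₀+1)*N+1 : ℕ):ℝ) * (N:ℝ)⁻¹) := by linarith
    _ = 4 * ((1/2:ℝ)^((j₀+1)*N+1)) ^ ((N:ℝ)⁻¹) := by rw [h2]
    _ ≤ 4 * |gval N c - gval N c'| ^ ((N:ℝ)⁻¹) := by linarith

lemma holder_on {N : ℕ} (hN : 2 ≤ N) :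
    HolderOnWith 4 (N:ℝ≥0)⁻¹ (digRead N) (Set.range (gval N)) := by
  rintro x ⟨c, rfl⟩ y ⟨c', rfl⟩
  rw [edist_dist, edist_dist, Real.dist_eq, Real.dist_eq]
  have hest := holder_real hN c c'
  have hD0 : (0:ℝ) ≤ |gval N c - gval N c'| := abs_nonneg _
  have hcoe : (((N:ℝ≥0)⁻¹ : ℝ≥0) : ℝ) = (N:ℝ)⁻¹ := by
    push_cast
    rfl
  calc ENNReal.ofReal |digRead N (gval N c) - digRead N (gval N c')|
      ≤ ENNReal.ofReal (4 * |gval N c - gval N c'| ^ ((N:ℝ)⁻¹)) := ENNReal.ofReal_le_ofReal hest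
  _ = ENNReal.ofReal 4 * ENNReal.ofReal (|gval N c - gval N c'| ^ ((N:ℝ)⁻¹)) :=
      ENNReal.ofReal_mul (by norm_num)
  _ = 4 * ENNReal.ofReal |gval N c - gval N c'| ^ (((N:ℝ≥0)⁻¹ : ℝ≥0) : ℝ) := by
      rw [ENNReal.ofReal_rpow_of_nonneg hD0 (by positivity), hcoe]
      norm_num
  _ ≤ _ := le_refl _

/-! ### extracting δ from an interior hole -/

lemma exists_delta {H : Set (ℝ × ℝ)}
    (hH : closure H ⊆ Set.Ioo (0:ℝ) 1 ×ˢ Set.Ioo (0:ℝ) 1) :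
    ∃ δ : ℝ, 0 < δ ∧ ∀ p ∈ H, δ ≤ p.1 ∧ δ ≤ p.2 := by
  rcases Set.eq_empty_or_nonempty (closure H) with hemp | hne
  · refine ⟨1, one_pos, fun p hp => absurd (subset_closure hp) ?_⟩
    rw [hemp]
    exact Set.notMem_empty p
  · have hbdd : Bornology.IsBounded (closure H) := by
      apply Bornology.IsBounded.subset _ hH
      exact (Metric.isBounded_Ioo 0 1).prod (Metric.isBounded_Ioo 0 1)
    have hcomp : IsCompact (closure H) := Metric.isCompact_of_isClosed_isBounded
      isClosed_closure hbdd
    have hcont : ContinuousOn (fun p : ℝ × ℝ => min p.1 p.2) (closure H) :=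
      (continuous_fst.min continuous_snd).continuousOn
    obtain ⟨p₀, hp₀, hmin⟩ := hcomp.exists_isMinOn hne hcont
    have hp₀' := hH hp₀
    refine ⟨min p₀.1 p₀.2, ?_, fun p hp => ?_⟩
    · exact lt_min hp₀'.1.1 hp₀'.2.1
    · have := hmin (subset_closure hp)
      simp only [le_min_iff] at this ⊢
      constructor
      · exact this.1
      · exact this.2


/-- An interior hole is not a dimension trap: if `closure H ⊆ (0,1)×(0,1)`,
then the survivor set has positive Hausdorff dimension. -/
theorem dimH_survivor_pos_of_interior_hole (H : Set (ℝ × ℝ))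
    (hH : closure H ⊆ Set.Ioo (0:ℝ) 1 ×ˢ Set.Ioo (0:ℝ) 1) :
    0 < dimH (survivor H) := by
  obtain ⟨δ, hδpos, hδ⟩ := exists_delta hH
  obtain ⟨k, hk⟩ : ∃ k : ℕ, (1/2:ℝ)^k < δ := exists_pow_lt_of_lt_one hδpos (by norm_num)
  set N := 2*k+2 with hNdef
  have hN : 2 ≤ N := by omega
  set S : Set ℝ := Set.range (gval N) with hSdef
  have hS_sub : S ⊆ Prod.fst '' (survivor H) := by
    rintro x ⟨c, rfl⟩
    refine ⟨pibar (ub k (fun i => c (i - 1))), ub_mem_survivor hδ hk _, ?_⟩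
    rw [pibar_ub_fst]
    congr 1
  have hdim1 : dimH S ≤ dimH (survivor H) := by
    calc dimH S ≤ dimH (Prod.fst '' (survivor H)) := dimH_mono hS_sub
    _ ≤ dimH (survivor H) := LipschitzWith.dimH_image_le LipschitzWith.prod_fst _
  have hIco : Set.Ico (0:ℝ) 1 ⊆ digRead N '' S := by
    intro y hy
    obtain ⟨v, hv⟩ := exists_bitval hy.1 hy.2
    exact ⟨gval N v, ⟨v, rfl⟩, by rw [digRead_gval hN v, hv]⟩
  have hr : (0:ℝ≥0) < (N:ℝ≥0)⁻¹ := by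
    apply inv_pos.2
    exact_mod_cast Nat.lt_of_lt_of_le Nat.zero_lt_two hN
  have hdim2 : dimH (digRead N '' S) ≤ dimH S / ((N:ℝ≥0)⁻¹ : ℝ≥0) :=
    (holder_on hN).dimH_image_le hr
  have hdim3 : (1:ℝ≥0∞) ≤ dimH (digRead N '' S) := by
    have h1 : dimH (Set.Ico (0:ℝ) 1) = 1 := by
      rw [Real.dimH_of_nonempty_interior, Module.finrank_self, Nat.cast_one]
      rw [interior_Ico]
      exact Set.nonempty_Ioo.2 one_pos
    calc (1:ℝ≥0∞) = dimH (Set.Ico (0:ℝ) 1) := h1.symm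
    _ ≤ dimH (digRead N '' S) := dimH_mono hIco
  have hfinal : (((N:ℝ≥0)⁻¹ : ℝ≥0) : ℝ≥0∞) ≤ dimH S := by
    have h2 : (1:ℝ≥0∞) ≤ dimH S / ((N:ℝ≥0)⁻¹ : ℝ≥0) := hdim3.trans hdim2
    have h3 := (ENNReal.le_div_iff_mul_le (Or.inl (by exact_mod_cast hr.ne'))
      (Or.inl ENNReal.coe_ne_top)).1 h2
    rwa [one_mul] at h3
  have hpos : (0:ℝ≥0∞) < (((N:ℝ≥0)⁻¹ : ℝ≥0) : ℝ≥0∞) := ENNReal.coe_pos.2 hr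
  exact lt_of_lt_of_le hpos (hfinal.trans hdim1)
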